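/- Let R be a ring with 1 and M a nontrivial left R-module (M has at least two elements). There do not exist coefficients α, β, γ, α', β', γ' ∈ R with α + β + γ = 1 and α' + β' + γ' = 1 such that the operations p(x,y,z) = α•x + β•y + γ•z and q(x,y,z) = α'•x + β'•y + γ'•z on M satisfy p(x,x,y) = p(x,y,y) and p(x,y,x) = q(x,x,y) = q(x,y,x) = q(y,x,x) for all x,y ∈ M. (Hence the system of identities p(x,x,y) ≈ p(x,y,y), p(x,y,x) ≈ q(x,x,y) ≈ q(x,y,x) ≈ q(y,x,x) fails in every full idempotent reduct of a nontrivial module, in particular over every finite ring.) -/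

import Mathlib

theorem system2_fails_in_modules {R M : Type*} [Ring R] [AddCommGroup M] [Module R M]
    (hM : ∃ a b : M, a ≠ b) :
    ¬ ∃ α β γ α' β' γ' : R,
      α + β + γ = 1 ∧ α' + β' + γ' = 1 ∧
      (∀ x y : M,
        (α • x + β • x + γ • y = α • x + β • y + γ • y) ∧
        (α • x + β • y + γ • x = α' • x + β' • x + γ' • y) ∧
        (α' • x + β' • x + γ' • y = α' • x + β' • y + γ' • x) ∧
        (α' • x + β' • y + γ' • x = α' • y + β' • x + γ' • x)) := by
  rintro ⟨α, β, γ, α', β', γ', hsum, hsum', h⟩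
  obtain ⟨a, b, hab⟩ := hM
  set m : M := a - b with hm
  have hm0 : m ≠ 0 := sub_ne_zero.mpr hab
  -- from identity 1 at x = 0 : β • y = 0
  have hβ : ∀ y : M, β • y = 0 := by
    intro y
    have := (h 0 y).1
    simp only [smul_zero, zero_add] at this
    exact right_eq_add.mp this
  -- from identity 2 at x = 0 : γ' • y = β • y = 0
  have hγ' : ∀ y : M, γ' • y = 0 := by
    intro y
    have := (h 0 y).2.1
    simp only [smul_zero, zero_add, add_zero] at this
    rw [hβ y] at this
    exact this.symm
  -- from identity 3 at x = 0 : β' • y = γ' • y = 0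
  have hβ' : ∀ y : M, β' • y = 0 := by
    intro y
    have := (h 0 y).2.2.1
    simp only [smul_zero, zero_add, add_zero] at this
    rw [← this, hγ' y]
  -- from identity 4 at x = 0 : α' • y = β' • y = 0
  have hα' : ∀ y : M, α' • y = 0 := by
    intro y
    have := (h 0 y).2.2.2
    simp only [smul_zero, zero_add, add_zero] at this
    rw [← this, hβ' y]
  -- but then m = (α'+β'+γ') • m = 0
  have : m = 0 := by
    have h1 : (α' + β' + γ') • m = m := by rw [hsum', one_smul]
    rw [add_smul, add_smul, hα' m, hβ' m, hγ' m, zero_add, zero_add] at h1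
    exact h1.symm
  exact hm0 this
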